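/- For any fixed sequence of payoff vectors u^1, …, u^n with entries in [0,h] and any ε ∈ (0,1), Perturbed Follow the Leader and Perturbed Be the Leader, coupled on the same random hallucinated payoffs, satisfy E[FTPL] ≥ (1−ε)·E[BTPL], where E[FTPL] = E[Σ_i u^i_{a^i}] with a^i = argmax_a (u^0_a + U^{i-1}_a), and E[BTPL] = E[Σ_i u^i_{b^i}] with b^i = argmax_a (u^0_a + U^i_a), ties broken by a common fixed rule. -/

import Mathlib

open MeasureTheory

/-- A fixed tie-breaking rule for maximization over `Fin k`: among the maximizers of `s`,
pick the one with the smallest index. -/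
noncomputable def argmaxFin {k : ℕ} (hk : 0 < k) (s : Fin k → ℝ) : Fin k := by
  classical
  exact (Finset.univ.filter fun a => ∀ b, s b ≤ s a).min' (by
    obtain ⟨a, -, ha⟩ :=
      Finset.exists_max_image (Finset.univ : Finset (Fin k)) s
        ⟨⟨0, hk⟩, Finset.mem_univ _⟩
    exact ⟨a, Finset.mem_filter.mpr ⟨Finset.mem_univ _, fun b => ha b (Finset.mem_univ b)⟩⟩)

lemma argmaxFin_isMax {k : ℕ} (hk : 0 < k) (s : Fin k → ℝ) (b : Fin k) :
    s b ≤ s (argmaxFin hk s) := by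
  classical
  have h : argmaxFin hk s ∈ Finset.univ.filter fun a => ∀ b, s b ≤ s a :=
    Finset.min'_mem _ _
  exact (Finset.mem_filter.mp h).2 b

lemma argmaxFin_le {k : ℕ} (hk : 0 < k) (s : Fin k → ℝ) (b : Fin k)
    (hb : ∀ c, s c ≤ s b) : argmaxFin hk s ≤ b := by
  classical
  exact Finset.min'_le _ _ (Finset.mem_filter.mpr ⟨Finset.mem_univ _, hb⟩)

lemma argmaxFin_eq {k : ℕ} (hk : 0 < k) (s : Fin k → ℝ) (a : Fin k)
    (h1 : ∀ b, s b ≤ s a) (h2 : ∀ b, (∀ c, s c ≤ s b) → a ≤ b) :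
    argmaxFin hk s = a :=
  le_antisymm (argmaxFin_le hk s a h1) (h2 _ (argmaxFin_isMax hk s))

lemma shift_step {k : ℕ} (hk : 0 < k) (h : ℝ)
    (z : Fin k → ℕ) (v uu : Fin k → ℝ)
    (h0 : ∀ b, 0 ≤ uu b) (h1 : ∀ b, uu b ≤ h) (a : Fin k)
    (ha : argmaxFin hk (fun b => h * (z b : ℝ) + (v b + uu b)) = a) :
    argmaxFin hk (fun b => h * ((Function.update z a (z a + 1)) b : ℝ) + v b) = a := by
  classical
  set s : Fin k → ℝ := fun b => h * (z b : ℝ) + (v b + uu b) with hs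
  set s' : Fin k → ℝ := fun b => h * ((Function.update z a (z a + 1)) b : ℝ) + v b with hs'
  have hsa : ∀ b, s b ≤ s a := by
    intro b; rw [← ha]; exact argmaxFin_isMax hk s b
  have hs'a : s' a = h * (z a : ℝ) + h + v a := by
    simp [hs', Function.update_self]; ring
  have hs'b : ∀ b, b ≠ a → s' b = h * (z b : ℝ) + v b := by
    intro b hb; simp [hs', Function.update_of_ne hb]
  have key : ∀ b, s' b ≤ s' a := by
    intro b
    by_cases hb : b = a
    · subst hb; exact le_rfl
    · rw [hs'b b hb, hs'a]
      have hb2 := hsa b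
      simp only [hs] at hb2
      linarith [h0 b, h1 a, hb2]
  refine argmaxFin_eq hk s' a key ?_
  intro b hbmax
  by_cases hb : b = a
  · exact hb ▸ le_rfl
  · have e3 : s' b = s' a := le_antisymm (key b) (hbmax a)
    have hsb : ∀ c, s c ≤ s b := by
      intro c
      have c1 : s b = s a := by
        rw [hs'b b hb, hs'a] at e3
        have hb2 := hsa b
        simp only [hs] at hb2 ⊢
        linarith [h0 b, h1 a]
      rw [c1]; exact hsa c
    rw [← ha]
    exact argmaxFin_le hk s b hsb

theorem ftpl_stability
    (k n : ℕ) (hk : 0 < k) (h ε : ℝ) (hh : 0 < h) (hε : 0 < ε) (hε1 : ε < 1)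
    (u : Fin n → Fin k → ℝ) (hu : ∀ i a, u i a ∈ Set.Icc (0 : ℝ) h)
    {Ω : Type*} [MeasurableSpace Ω] (μ : Measure Ω) [IsProbabilityMeasure μ]
    (Z : Fin k → Ω → ℕ)
    (hmeas : ∀ a, Measurable (Z a))
    (hindep : ProbabilityTheory.iIndepFun Z μ)
    (hgeom : ∀ (a : Fin k) (ℓ : ℕ),
      μ {ω | ℓ ≤ Z a ω} = ENNReal.ofReal ((1 - ε) ^ ℓ)) :
    ∫ ω, (∑ i : Fin n,
        u i (argmaxFin hk (fun a =>
          h * (Z a ω : ℝ) +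
            ∑ i' ∈ Finset.univ.filter (fun i' : Fin n => i'.val < i.val), u i' a))) ∂μ
      ≥ (1 - ε) *
        ∫ ω, (∑ i : Fin n,
          u i (argmaxFin hk (fun a =>
            h * (Z a ω : ℝ) +
              ∑ i' ∈ Finset.univ.filter (fun i' : Fin n => i'.val ≤ i.val), u i' a))) ∂μ := by
  classical
  have hε0 : (0:ℝ) ≤ 1 - ε := by linarith
  set p : ℕ → ENNReal := fun m => ENNReal.ofReal (ε * (1-ε)^m) with hp
  -- point masses
  have hpt : ∀ a m, μ {ω | Z a ω = m} = p m := by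
    intro a m
    have hset : {ω | Z a ω = m} = {ω | m ≤ Z a ω} \ {ω | m+1 ≤ Z a ω} := by
      ext ω; simp only [Set.mem_setOf_eq, Set.mem_diff]; omega
    have hsub : {ω | m+1 ≤ Z a ω} ⊆ {ω | m ≤ Z a ω} := fun ω hω => by
      simp only [Set.mem_setOf_eq] at *; omega
    have hm1 : MeasurableSet {ω | m+1 ≤ Z a ω} := by
      have : {ω | m+1 ≤ Z a ω} = Z a ⁻¹' {x | m+1 ≤ x} := rfl
      rw [this]; exact (hmeas a) (Set.Countable.measurableSet (Set.to_countable _))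
    rw [hset, measure_diff hsub hm1.nullMeasurableSet (measure_ne_top μ _),
      hgeom, hgeom]
    rw [← ENNReal.ofReal_sub _ (by positivity)]
    congr 1
    rw [pow_succ]; ring
  -- joint point masses
  set Zv : Ω → (Fin k → ℕ) := fun ω a => Z a ω with hZv
  have hZvm : Measurable Zv := measurable_pi_lambda _ hmeas
  have hjoint : ∀ z : Fin k → ℕ, μ (Zv ⁻¹' {z}) = ∏ a, p (z a) := by
    intro z
    have hset : Zv ⁻¹' {z} = ⋂ a ∈ (Finset.univ : Finset (Fin k)), Z a ⁻¹' {z a} := by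
      ext ω
      simp [hZv, Set.mem_iInter, funext_iff]
    rw [hset, hindep.measure_inter_preimage_eq_mul Finset.univ
      (sets := fun a => {z a}) (fun a _ => measurableSet_singleton _)]
    exact Finset.prod_congr rfl fun a _ => hpt a (z a)
  -- measure of preimage of any set
  have hT : ∀ T : Set (Fin k → ℕ), μ (Zv ⁻¹' T) = ∑' z : T, ∏ a, p ((z : Fin k → ℕ) a) := by
    intro T
    have hset : Zv ⁻¹' T = ⋃ z ∈ T, Zv ⁻¹' {z} := by
      ext ω; simp
    rw [hset, measure_biUnion (Set.to_countable T) ?_ ?_]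
    · exact tsum_congr fun z => hjoint z
    · intro z1 _ z2 _ hne
      refine Set.disjoint_left.mpr fun ω hω1 hω2 => ?_
      simp only [Set.mem_preimage, Set.mem_singleton_iff] at hω1 hω2
      exact hne (hω1 ▸ hω2 ▸ rfl)
    · intro z _
      exact hZvm (measurableSet_singleton z)
  -- shift inequality
  have hshift : ∀ (A B : Set (Fin k → ℕ)) (a : Fin k),
      (∀ z ∈ A, Function.update z a (z a + 1) ∈ B) →
      ENNReal.ofReal (1-ε) * μ (Zv ⁻¹' A) ≤ μ (Zv ⁻¹' B) := by
    intro A B a hAB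
    set φ : (Fin k → ℕ) → (Fin k → ℕ) := fun z => Function.update z a (z a + 1) with hφ
    have hinj : Function.Injective φ := by
      intro z1 z2 hz
      funext b
      by_cases hb : b = a
      · subst hb
        have := congrFun hz b
        simpa [hφ, Function.update_self] using this
      · have := congrFun hz b
        simpa [hφ, Function.update_of_ne hb] using this
    have hw : ∀ z : Fin k → ℕ, (∏ b, p (φ z b)) = ENNReal.ofReal (1-ε) * ∏ b, p (z b) := by
      intro z
      have h1 : ∀ b, p (φ z b) = Function.update (fun b => p (z b)) a (p (z a + 1)) b := by
        intro b
        by_cases hb : b = a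
        · subst hb; simp [hφ, Function.update_self]
        · simp [hφ, Function.update_of_ne hb]
      rw [Finset.prod_congr rfl (fun b _ => h1 b),
        Finset.prod_update_of_mem (Finset.mem_univ a)]
      have h2 : p (z a + 1) = ENNReal.ofReal (1-ε) * p (z a) := by
        rw [hp]; simp only
        rw [← ENNReal.ofReal_mul hε0]
        congr 1; rw [pow_succ]; ring
      rw [h2, mul_assoc]
      congr 1
      rw [Finset.sdiff_singleton_eq_erase]
      exact Finset.mul_prod_erase Finset.univ (fun b => p (z b)) (Finset.mem_univ a)
    have himg : φ '' A ⊆ B := by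
      rintro _ ⟨z, hz, rfl⟩; exact hAB z hz
    calc ENNReal.ofReal (1-ε) * μ (Zv ⁻¹' A)
        = ∑' z : A, ∏ b, p (φ (z : Fin k → ℕ) b) := by
          rw [hT A, ← ENNReal.tsum_mul_left]
          exact tsum_congr fun z => (hw z).symm
      _ = ∑' z : φ '' A, ∏ b, p ((z : Fin k → ℕ) b) := by
          refine Eq.trans ?_
            ((Equiv.Set.image φ A hinj).tsum_eq
              (fun z : φ '' A => ∏ b, p ((z : Fin k → ℕ) b)))
          exact tsum_congr fun z => by simp [Equiv.Set.image, Equiv.Set.imageOfInjOn]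
      _ ≤ ∑' z : B, ∏ b, p ((z : Fin k → ℕ) b) := by
          rw [tsum_subtype (φ '' A) (fun z => ∏ b, p (z b)),
            tsum_subtype B (fun z => ∏ b, p (z b))]
          exact ENNReal.tsum_le_tsum fun z =>
            Set.indicator_le_indicator_of_subset himg (fun _ => zero_le) z
      _ = μ (Zv ⁻¹' B) := (hT B).symm
  -- integral formula
  have hSm : ∀ (Fn : (Fin k → ℕ) → Fin k) (a : Fin k),
      MeasurableSet (Zv ⁻¹' (Fn ⁻¹' {a})) :=
    fun Fn a => hZvm (Set.Countable.measurableSet (Set.to_countable _))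
  have hint : ∀ (Fn : (Fin k → ℕ) → Fin k) (ui : Fin k → ℝ),
      Integrable (fun ω => ui (Fn (Zv ω))) μ ∧
      ∫ ω, ui (Fn (Zv ω)) ∂μ = ∑ a, (μ (Zv ⁻¹' (Fn ⁻¹' {a}))).toReal * ui a := by
    intro Fn ui
    have hfe : (fun ω => ui (Fn (Zv ω))) =
        fun ω => ∑ a, Set.indicator (Zv ⁻¹' (Fn ⁻¹' {a})) (fun _ => ui a) ω := by
      funext ω
      rw [Finset.sum_eq_single (Fn (Zv ω))]
      · simp [Set.indicator_apply]
      · intro b _ hb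
        simp only [Set.indicator_apply, Set.mem_preimage, Set.mem_singleton_iff]
        rw [if_neg]
        intro hc; exact hb hc.symm
      · simp
    constructor
    · rw [hfe]
      exact integrable_finset_sum _ fun a _ => (integrable_const (ui a)).indicator (hSm Fn a)
    · rw [hfe, integral_finset_sum _ fun a _ => (integrable_const (ui a)).indicator (hSm Fn a)]
      refine Finset.sum_congr rfl fun a _ => ?_
      rw [integral_indicator_const _ (hSm Fn a)]
      simp [smul_eq_mul, measureReal_def]
  -- the two selection functions
  set F : Fin n → (Fin k → ℕ) → Fin k := fun i z => argmaxFin hk (fun a =>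
    h * (z a : ℝ) + ∑ i' ∈ Finset.univ.filter (fun i' : Fin n => i'.val < i.val), u i' a)
    with hF
  set G : Fin n → (Fin k → ℕ) → Fin k := fun i z => argmaxFin hk (fun a =>
    h * (z a : ℝ) + ∑ i' ∈ Finset.univ.filter (fun i' : Fin n => i'.val ≤ i.val), u i' a)
    with hG
  -- closed sum = open sum + current payoff
  have hsum : ∀ (i : Fin n) (b : Fin k),
      ∑ i' ∈ Finset.univ.filter (fun i' : Fin n => i'.val ≤ i.val), u i' b =
      (∑ i' ∈ Finset.univ.filter (fun i' : Fin n => i'.val < i.val), u i' b) + u i b := by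
    intro i b
    have hins : Finset.univ.filter (fun i' : Fin n => i'.val ≤ i.val) =
        insert i (Finset.univ.filter (fun i' : Fin n => i'.val < i.val)) := by
      ext j; simp [Fin.ext_iff]; omega
    rw [hins, Finset.sum_insert (by simp)]
    ring
  -- key per-round per-action inequality
  have key : ∀ (i : Fin n) (a : Fin k),
      ENNReal.ofReal (1-ε) * μ (Zv ⁻¹' (G i ⁻¹' {a})) ≤ μ (Zv ⁻¹' (F i ⁻¹' {a})) := by
    intro i a
    refine hshift _ _ a ?_
    intro z hz
    simp only [Set.mem_preimage, Set.mem_singleton_iff] at hz ⊢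
    refine shift_step hk h z _ (u i) (fun b => (hu i b).1) (fun b => (hu i b).2) a ?_
    rw [hG] at hz
    rw [← hz]
    congr 1
    funext b
    rw [hsum i b]
  -- rewrite both integrals
  have hFi : ∀ i : Fin n, Integrable (fun ω => u i (F i (Zv ω))) μ :=
    fun i => (hint (F i) (u i)).1
  have hGi : ∀ i : Fin n, Integrable (fun ω => u i (G i (Zv ω))) μ :=
    fun i => (hint (G i) (u i)).1
  have hLHS : ∫ ω, (∑ i : Fin n, u i (F i (Zv ω))) ∂μ =
      ∑ i : Fin n, ∑ a, (μ (Zv ⁻¹' (F i ⁻¹' {a}))).toReal * u i a := by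
    rw [integral_finset_sum _ fun i _ => hFi i]
    exact Finset.sum_congr rfl fun i _ => (hint (F i) (u i)).2
  have hRHS : ∫ ω, (∑ i : Fin n, u i (G i (Zv ω))) ∂μ =
      ∑ i : Fin n, ∑ a, (μ (Zv ⁻¹' (G i ⁻¹' {a}))).toReal * u i a := by
    rw [integral_finset_sum _ fun i _ => hGi i]
    exact Finset.sum_congr rfl fun i _ => (hint (G i) (u i)).2
  have hgoal :
      (1 - ε) * ∫ ω, (∑ i : Fin n, u i (G i (Zv ω))) ∂μ ≤
      ∫ ω, (∑ i : Fin n, u i (F i (Zv ω))) ∂μ := by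
    rw [hLHS, hRHS, Finset.mul_sum]
    refine Finset.sum_le_sum fun i _ => ?_
    rw [Finset.mul_sum]
    refine Finset.sum_le_sum fun a _ => ?_
    rw [← mul_assoc]
    refine mul_le_mul_of_nonneg_right ?_ (hu i a).1
    have h1 : (1 - ε) * (μ (Zv ⁻¹' (G i ⁻¹' {a}))).toReal =
        (ENNReal.ofReal (1-ε) * μ (Zv ⁻¹' (G i ⁻¹' {a}))).toReal := by
      rw [ENNReal.toReal_mul, ENNReal.toReal_ofReal hε0]
    rw [h1]
    exact ENNReal.toReal_mono (measure_ne_top μ _) (key i a)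
  exact hgoal
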